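/- Let $\mathcal{M}_1, \ldots, \mathcal{M}_r \subseteq \mathbb{R}^N$ be smooth embedded submanifolds that are cones. Then the condition number of the join decomposition problem is scale invariant: for every $(p_1, \ldots, p_r) \in \mathcal{M}_1 \times \cdots \times \mathcal{M}_r$ and all nonzero reals $\beta_1, \ldots, \beta_r$, one has $\kappa((p_1, \ldots, p_r)) = \kappa((\beta_1 p_1, \ldots, \beta_r p_r))$. -/

import Mathlib

open scoped BigOperators

/-- The smallest singular value of the "matrix" whose columns are the vectors `u i`. -/
noncomputable def sminFam {E : Type*} [NormedAddCommGroup E] [InnerProductSpace ℝ E]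
    {ι : Type*} [Fintype ι] (u : ι → E) : ℝ :=
  sInf {c : ℝ | ∃ x : ι → ℝ, ∑ i, (x i) ^ 2 = 1 ∧ c = ‖∑ i, x i • u i‖}

/-- The tangent space at `p` to a subset `M ⊆ ℝ^N`, as the span of the tangent cone
(for an embedded smooth submanifold this is the usual tangent space). -/
noncomputable def tangentSpaceAt {N : ℕ} (M : Set (EuclideanSpace ℝ (Fin N)))
    (p : EuclideanSpace ℝ (Fin N)) : Submodule ℝ (EuclideanSpace ℝ (Fin N)) :=
  Submodule.span ℝ (tangentConeAt ℝ M p)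

open Filter in
lemma smul_mem_tangentCone {E : Type*} [NormedAddCommGroup E] [NormedSpace ℝ E]
    {M : Set E} (hcone : ∀ p ∈ M, ∀ α : ℝ, α ≠ 0 → α • p ∈ M)
    (p : E) {β : ℝ} (hβ : β ≠ 0) {y : E} (hy : y ∈ tangentConeAt ℝ M p) :
    β • y ∈ tangentConeAt ℝ M (β • p) := by
  obtain ⟨α, l, hl, c, d, h0, h1, h3⟩ := exists_fun_of_mem_tangentConeAt hy
  haveI := hl
  refine mem_tangentConeAt_of_seq l c (fun k => β • d k) (by simpa using h0.const_smul β) ?_ ?_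
  · filter_upwards [h1] with k hk
    have := hcone _ hk β hβ
    simpa [smul_add] using this
  · have := h3.const_smul β
    convert this using 2 with k
    exact smul_comm _ _ _

lemma span_tangentCone_smul {E : Type*} [NormedAddCommGroup E] [NormedSpace ℝ E]
    {M : Set E} (hcone : ∀ p ∈ M, ∀ α : ℝ, α ≠ 0 → α • p ∈ M)
    (p : E) {β : ℝ} (hβ : β ≠ 0) :
    Submodule.span ℝ (tangentConeAt ℝ M p) = Submodule.span ℝ (tangentConeAt ℝ M (β • p)) := by
  apply le_antisymm <;> rw [Submodule.span_le] <;> intro y hy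
  · have := smul_mem_tangentCone hcone p hβ hy
    have h2 : β⁻¹ • β • y ∈ Submodule.span ℝ (tangentConeAt ℝ M (β • p)) :=
      Submodule.smul_mem _ _ (Submodule.subset_span this)
    simpa [smul_smul, inv_mul_cancel₀ hβ] using h2
  · have := smul_mem_tangentCone hcone (β • p) (inv_ne_zero hβ) hy
    rw [smul_smul, inv_mul_cancel₀ hβ, one_smul] at this
    have h2 : β • β⁻¹ • y ∈ Submodule.span ℝ (tangentConeAt ℝ M p) :=
      Submodule.smul_mem _ _ (Submodule.subset_span this)
    simpa [smul_smul, mul_inv_cancel₀ hβ] using h2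

lemma orthonormal_repr {E : Type*} [NormedAddCommGroup E] [InnerProductSpace ℝ E]
    {m : ℕ} {u : Fin m → E} (hu : Orthonormal ℝ u) {w : E}
    (hw : w ∈ Submodule.span ℝ (Set.range u)) :
    ∑ j, (inner ℝ (u j) w : ℝ) • u j = w := by
  induction hw using Submodule.span_induction with
  | mem x hx =>
    obtain ⟨k, rfl⟩ := hx
    simp [orthonormal_iff_ite.mp hu, Finset.sum_ite_eq']
  | zero => simp
  | add x y hx hy ihx ihy => simp only [inner_add_right, add_smul, Finset.sum_add_distrib, ihx, ihy]
  | smul a x hx ihx =>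
    simp only [real_inner_smul_right, mul_smul, ← Finset.smul_sum, ihx]

lemma sq_sum_eq {E : Type*} [NormedAddCommGroup E] [InnerProductSpace ℝ E]
    {m : ℕ} {u : Fin m → E} (hu : Orthonormal ℝ u) (x : Fin m → ℝ) :
    ∑ j, (x j) ^ 2 = ‖∑ j, x j • u j‖ ^ 2 := by
  rw [← real_inner_self_eq_norm_sq]
  rw [hu.inner_sum x x Finset.univ]
  simp [sq]

lemma subset_aux {E : Type*} [NormedAddCommGroup E] [InnerProductSpace ℝ E]
    {r : ℕ} {n : Fin r → ℕ} (u v : (i : Fin r) → Fin (n i) → E)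
    (huo : ∀ i, Orthonormal ℝ (u i)) (hvo : ∀ i, Orthonormal ℝ (v i))
    (hmem : ∀ i k, v i k ∈ Submodule.span ℝ (Set.range (u i))) :
    {c : ℝ | ∃ x : ((i : Fin r) × Fin (n i)) → ℝ, ∑ q, (x q) ^ 2 = 1 ∧
        c = ‖∑ q, x q • v q.1 q.2‖} ⊆
    {c : ℝ | ∃ x : ((i : Fin r) × Fin (n i)) → ℝ, ∑ q, (x q) ^ 2 = 1 ∧
        c = ‖∑ q, x q • u q.1 q.2‖} := by
  rintro c ⟨x, hx1, rfl⟩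
  set y : ((i : Fin r) × Fin (n i)) → ℝ :=
    fun q => ∑ k, (inner ℝ (u q.1 q.2) (v q.1 k) : ℝ) * x ⟨q.1, k⟩ with hy
  have blockA : ∀ i, ∑ j, y ⟨i, j⟩ • u i j = ∑ k, x ⟨i, k⟩ • v i k := by
    intro i
    calc ∑ j, y ⟨i, j⟩ • u i j
        = ∑ j, ∑ k, (x ⟨i, k⟩ * (inner ℝ (u i j) (v i k) : ℝ)) • u i j := by
          simp [hy, Finset.sum_smul, mul_comm]
      _ = ∑ k, ∑ j, (x ⟨i, k⟩ * (inner ℝ (u i j) (v i k) : ℝ)) • u i j := Finset.sum_comm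
      _ = ∑ k, x ⟨i, k⟩ • ∑ j, (inner ℝ (u i j) (v i k) : ℝ) • u i j := by
          simp [Finset.smul_sum, mul_smul]
      _ = ∑ k, x ⟨i, k⟩ • v i k := by
          refine Finset.sum_congr rfl fun k _ => ?_
          rw [orthonormal_repr (huo i) (hmem i k)]
  have blockB : ∀ i, ∑ j, (y ⟨i, j⟩) ^ 2 = ∑ k, (x ⟨i, k⟩) ^ 2 := by
    intro i
    rw [sq_sum_eq (huo i), blockA i, ← sq_sum_eq (hvo i)]
  refine ⟨y, ?_, ?_⟩
  · rw [← Finset.univ_sigma_univ, Finset.sum_sigma] at hx1 ⊢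
    simpa [blockB] using hx1
  · rw [← Finset.univ_sigma_univ, Finset.sum_sigma, Finset.sum_sigma]
    simp only [blockA]

/-- Scale invariance of the condition number of the join decomposition problem for cones:
if every `Mᵢ` is a cone, then for any nonzero scalings `βᵢ`, any orthonormal bases `u i` of the
tangent spaces at `pᵢ` and `v i` of the tangent spaces at `βᵢ • pᵢ` give block matrices with the
same smallest singular value, and hence `κ((p₁,…,p_r)) = κ((β₁ p₁, …, β_r p_r))`. -/
theorem condition_number_scale_invariant
    (N r : ℕ) (n : Fin r → ℕ)
    (M : Fin r → Set (EuclideanSpace ℝ (Fin N)))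
    (hcone : ∀ i, ∀ p ∈ M i, ∀ α : ℝ, α ≠ 0 → α • p ∈ M i)
    (p : (i : Fin r) → EuclideanSpace ℝ (Fin N)) (hp : ∀ i, p i ∈ M i)
    (β : Fin r → ℝ) (hβ : ∀ i, β i ≠ 0)
    (hdim : ∀ i, Module.finrank ℝ (tangentSpaceAt (M i) (p i)) = n i)
    (u v : (i : Fin r) → Fin (n i) → EuclideanSpace ℝ (Fin N))
    (huo : ∀ i, Orthonormal ℝ (u i)) (hvo : ∀ i, Orthonormal ℝ (v i))
    (huspan : ∀ i, Submodule.span ℝ (Set.range (u i)) = tangentSpaceAt (M i) (p i))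
    (hvspan : ∀ i, Submodule.span ℝ (Set.range (v i)) = tangentSpaceAt (M i) (β i • p i)) :
    sminFam (fun q : (i : Fin r) × Fin (n i) => u q.1 q.2) =
      sminFam (fun q : (i : Fin r) × Fin (n i) => v q.1 q.2) ∧
    (sminFam (fun q : (i : Fin r) × Fin (n i) => u q.1 q.2))⁻¹ =
      (sminFam (fun q : (i : Fin r) × Fin (n i) => v q.1 q.2))⁻¹ := by
  have hspan : ∀ i, Submodule.span ℝ (Set.range (u i)) = Submodule.span ℝ (Set.range (v i)) := by
    intro i
    rw [huspan i, hvspan i]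
    exact span_tangentCone_smul (hcone i) (p i) (hβ i)
  have hmemuv : ∀ i k, v i k ∈ Submodule.span ℝ (Set.range (u i)) := fun i k => by
    rw [hspan i]; exact Submodule.subset_span ⟨k, rfl⟩
  have hmemvu : ∀ i k, u i k ∈ Submodule.span ℝ (Set.range (v i)) := fun i k => by
    rw [← hspan i]; exact Submodule.subset_span ⟨k, rfl⟩
  have hsets : {c : ℝ | ∃ x : ((i : Fin r) × Fin (n i)) → ℝ, ∑ q, (x q) ^ 2 = 1 ∧
        c = ‖∑ q, x q • u q.1 q.2‖} =
      {c : ℝ | ∃ x : ((i : Fin r) × Fin (n i)) → ℝ, ∑ q, (x q) ^ 2 = 1 ∧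
        c = ‖∑ q, x q • v q.1 q.2‖} :=
    le_antisymm (subset_aux v u hvo huo hmemvu) (subset_aux u v huo hvo hmemuv)
  have h : sminFam (fun q : (i : Fin r) × Fin (n i) => u q.1 q.2) =
      sminFam (fun q : (i : Fin r) × Fin (n i) => v q.1 q.2) := by
    unfold sminFam
    rw [hsets]
  exact ⟨h, by rw [h]⟩
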